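/- Let B = k[x₁,x₂,y₁,y₂] be a polynomial ring in four variables over a field k of characteristic zero, and T = x₁ ∂_{y₁} + x₂ ∂_{y₂} the locally nilpotent derivation with kernel A = k[x₁, x₂, g] where g = x₁y₂ − x₂y₁. Then the first degree module F₁ = ker T² equals A + A y₁ + A y₂, and the plinth ideal T F₁ equals x₁ A + x₂ A. -/

import Mathlib

open MvPolynomial

namespace WinkAux

noncomputable section

variable (k : Type*) [Field k] [CharZero k]

/-- weights: x-variables have weight 1, y-variables weight -1 -/
def ww : Fin 4 → ℤ := ![1, 1, -1, -1]

def Td : Derivation k (MvPolynomial (Fin 4) k) (MvPolynomial (Fin 4) k) :=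
  (X 0 : MvPolynomial (Fin 4) k) • pderiv 2 + (X 1 : MvPolynomial (Fin 4) k) • pderiv 3

def Sd : Derivation k (MvPolynomial (Fin 4) k) (MvPolynomial (Fin 4) k) :=
  (X 2 : MvPolynomial (Fin 4) k) • pderiv 0 + (X 3 : MvPolynomial (Fin 4) k) • pderiv 1

def Hd : Derivation k (MvPolynomial (Fin 4) k) (MvPolynomial (Fin 4) k) :=
  ((X 0 : MvPolynomial (Fin 4) k) • pderiv 0 + (X 1 : MvPolynomial (Fin 4) k) • pderiv 1)
    - ((X 2 : MvPolynomial (Fin 4) k) • pderiv 2 + (X 3 : MvPolynomial (Fin 4) k) • pderiv 3)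

def gP : MvPolynomial (Fin 4) k := X 0 * X 3 - X 1 * X 2

def θ : MvPolynomial (Fin 3) k →ₐ[k] MvPolynomial (Fin 4) k := aeval ![X 0, X 1, gP k]

variable {k}

lemma Td_apply (f : MvPolynomial (Fin 4) k) :
    Td k f = X 0 * pderiv 2 f + X 1 * pderiv 3 f := by
  simp [Td, smul_eq_mul]

lemma Sd_apply (f : MvPolynomial (Fin 4) k) :
    Sd k f = X 2 * pderiv 0 f + X 3 * pderiv 1 f := by
  simp [Sd, smul_eq_mul]

lemma Hd_apply (f : MvPolynomial (Fin 4) k) :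
    Hd k f = X 0 * pderiv 0 f + X 1 * pderiv 1 f - (X 2 * pderiv 2 f + X 3 * pderiv 3 f) := by
  simp [Hd, smul_eq_mul]

@[simp] lemma Td_X0 : Td k (X 0) = 0 := by simp [Td_apply, pderiv_X]
@[simp] lemma Td_X1 : Td k (X 1) = 0 := by simp [Td_apply, pderiv_X]
@[simp] lemma Td_X2 : Td k (X 2) = X 0 := by simp [Td_apply, pderiv_X]
@[simp] lemma Td_X3 : Td k (X 3) = X 1 := by simp [Td_apply, pderiv_X]
@[simp] lemma Sd_X0 : Sd k (X 0) = X 2 := by simp [Sd_apply, pderiv_X]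
@[simp] lemma Sd_X1 : Sd k (X 1) = X 3 := by simp [Sd_apply, pderiv_X]
@[simp] lemma Sd_X2 : Sd k (X 2) = 0 := by simp [Sd_apply, pderiv_X]
@[simp] lemma Sd_X3 : Sd k (X 3) = 0 := by simp [Sd_apply, pderiv_X]

@[simp] lemma Td_g : Td k (gP k) = 0 := by
  simp [gP]; ring

@[simp] lemma Sd_g : Sd k (gP k) = 0 := by
  simp [gP]; ring

lemma ker_adjoin {f : MvPolynomial (Fin 4) k}
    (hf : f ∈ Algebra.adjoin k ({X 0, X 1, gP k} : Set (MvPolynomial (Fin 4) k))) :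
    Td k f = 0 := by
  induction hf using Algebra.adjoin_induction with
  | mem x hx => rcases hx with rfl | rfl | rfl <;> simp
  | algebraMap r => simp
  | add x y _ _ hx hy => simp [hx, hy]
  | mul x y _ _ hx hy => simp [hx, hy]

lemma coeff_pderiv' {n : ℕ} (i : Fin n) (μ : Fin n →₀ ℕ) (f : MvPolynomial (Fin n) k) :
    coeff μ (pderiv i f) = (μ i + 1) * coeff (μ + Finsupp.single i 1) f := by
  induction f using MvPolynomial.induction_on' with
  | monomial ν a =>
      rw [pderiv_monomial, coeff_monomial, coeff_monomial]
      by_cases h : ν = μ + Finsupp.single i 1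
      · subst h
        rw [if_pos rfl, if_pos (add_tsub_cancel_right μ (Finsupp.single i 1))]
        rw [Finsupp.add_apply, Finsupp.single_eq_same]
        push_cast
        ring
      · rw [if_neg h, mul_zero]
        by_cases h2 : ν - Finsupp.single i 1 = μ
        · rcases Nat.eq_zero_or_pos (ν i) with h3 | h3
          · simp [h3]
          · exact absurd (by rw [← h2, tsub_add_cancel_of_le (Finsupp.single_le_iff.mpr h3)]) h
        · rw [if_neg h2]
  | add p q hp hq => simp [hp, hq, mul_add]


lemma coeff_X_mul_pderiv_ne {i j : Fin 4} (hij : j ≠ i) (μ : Fin 4 →₀ ℕ)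
    (f : MvPolynomial (Fin 4) k) :
    coeff μ (X i * pderiv j f) =
      if 1 ≤ μ i then ((μ j : k) + 1) * coeff (μ - Finsupp.single i 1 + Finsupp.single j 1) f
      else 0 := by
  rw [coeff_X_mul', coeff_pderiv']
  by_cases hc : 1 ≤ μ i
  · rw [if_pos (Finsupp.mem_support_iff.mpr (Nat.one_le_iff_ne_zero.mp hc)), if_pos hc]
    have : ((μ - Finsupp.single i 1 : Fin 4 →₀ ℕ) j) = μ j := by
      rw [Finsupp.tsub_apply, Finsupp.single_eq_of_ne' (Ne.symm hij), Nat.sub_zero]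
    rw [this]
  · rw [if_neg (fun hh => hc (Nat.one_le_iff_ne_zero.mpr (Finsupp.mem_support_iff.mp hh))),
      if_neg hc]

lemma coeff_X_mul_pderiv_self (i : Fin 4) (μ : Fin 4 →₀ ℕ) (f : MvPolynomial (Fin 4) k) :
    coeff μ (X i * pderiv i f) = (μ i : k) * coeff μ f := by
  rw [coeff_X_mul', coeff_pderiv']
  by_cases h : i ∈ μ.support
  · rw [if_pos h]
    have h1 : 1 ≤ μ i := Nat.one_le_iff_ne_zero.mpr (Finsupp.mem_support_iff.mp h)
    have h2 : ((μ - Finsupp.single i 1 : Fin 4 →₀ ℕ) i) = μ i - 1 := by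
      rw [Finsupp.tsub_apply, Finsupp.single_eq_same]
    have h3 : μ - Finsupp.single i 1 + Finsupp.single i 1 = μ :=
      tsub_add_cancel_of_le (Finsupp.single_le_iff.mpr h1)
    rw [h2, h3]
    congr 1
    have h4 : μ i - 1 + 1 = μ i := Nat.succ_pred_eq_of_pos h1
    calc ((μ i - 1 : ℕ) : k) + 1 = ((μ i - 1 + 1 : ℕ) : k) := by push_cast; ring
    _ = (μ i : k) := by rw [h4]
  · rw [if_neg h]
    have : μ i = 0 := Finsupp.notMem_support_iff.mp h
    rw [this]
    simp

lemma coeff_Td (μ : Fin 4 →₀ ℕ) (f : MvPolynomial (Fin 4) k) :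
    coeff μ (Td k f) =
      (if 1 ≤ μ 0 then ((μ 2 : k) + 1)
          * coeff (μ - Finsupp.single 0 1 + Finsupp.single 2 1) f else 0)
      + (if 1 ≤ μ 1 then ((μ 3 : k) + 1)
          * coeff (μ - Finsupp.single 1 1 + Finsupp.single 3 1) f else 0) := by
  rw [Td_apply, coeff_add, coeff_X_mul_pderiv_ne (by decide), coeff_X_mul_pderiv_ne (by decide)]

lemma coeff_Sd (μ : Fin 4 →₀ ℕ) (f : MvPolynomial (Fin 4) k) :
    coeff μ (Sd k f) =
      (if 1 ≤ μ 2 then ((μ 0 : k) + 1)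
          * coeff (μ - Finsupp.single 2 1 + Finsupp.single 0 1) f else 0)
      + (if 1 ≤ μ 3 then ((μ 1 : k) + 1)
          * coeff (μ - Finsupp.single 3 1 + Finsupp.single 1 1) f else 0) := by
  rw [Sd_apply, coeff_add, coeff_X_mul_pderiv_ne (by decide), coeff_X_mul_pderiv_ne (by decide)]

lemma weight_single (j : Fin 4) : Finsupp.weight ww (Finsupp.single j 1) = ww j := by
  rw [Finsupp.weight_apply, Finsupp.sum_single_index] <;> simp

lemma weight_sub_add {μ : Fin 4 →₀ ℕ} {i j : Fin 4} (h : 1 ≤ μ i) :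
    Finsupp.weight (ww) (μ - Finsupp.single i 1 + Finsupp.single j 1)
      = Finsupp.weight ww μ - ww i + ww j := by
  have h3 : μ - Finsupp.single i 1 + Finsupp.single i 1 = μ :=
    tsub_add_cancel_of_le (Finsupp.single_le_iff.mpr h)
  have h4 : Finsupp.weight ww (μ - Finsupp.single i 1) = Finsupp.weight ww μ - ww i := by
    have h5 := congrArg (Finsupp.weight ww) h3
    rw [map_add, weight_single] at h5
    omega
  rw [map_add, weight_single, h4]

lemma bracket_TSH : (⁅Td k, Sd k⁆ : Derivation k (MvPolynomial (Fin 4) k) (MvPolynomial (Fin 4) k))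
    = Hd k := by
  ext i
  fin_cases i <;>
    simp [Derivation.commutator_apply, Hd_apply, pderiv_X]

lemma bracket_TS (f : MvPolynomial (Fin 4) k) :
    Td k (Sd k f) - Sd k (Td k f) = Hd k f := by
  have h := bracket_TSH (k := k)
  have h2 := congrArg (fun (D : Derivation k (MvPolynomial (Fin 4) k) (MvPolynomial (Fin 4) k))
    => D f) h
  simpa [Derivation.commutator_apply] using h2

lemma weight_eval (μ : Fin 4 →₀ ℕ) :
    Finsupp.weight ww μ = (μ 0 : ℤ) + μ 1 - μ 2 - μ 3 := by
  rw [Finsupp.weight_apply, Finsupp.sum_fintype _ _ (fun i => zero_smul ℕ (ww i)),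
    Fin.sum_univ_four]
  simp [ww]
  ring

lemma ww0 : ww 0 = 1 := rfl
lemma ww1 : ww 1 = 1 := rfl
lemma ww2 : ww 2 = -1 := rfl
lemma ww3 : ww 3 = -1 := rfl

lemma euler {f : MvPolynomial (Fin 4) k} {c : ℤ} (hf : IsWeightedHomogeneous ww f c) :
    Hd k f = c • f := by
  ext μ
  rw [Hd_apply]
  rw [coeff_sub, coeff_add, coeff_add, coeff_X_mul_pderiv_self, coeff_X_mul_pderiv_self,
    coeff_X_mul_pderiv_self, coeff_X_mul_pderiv_self, coeff_smul]
  by_cases hz : coeff μ f = 0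
  · rw [hz]; simp
  · have hw := hf hz
    rw [weight_eval] at hw
    have : (μ 0 : k) * coeff μ f + (μ 1 : k) * coeff μ f
        - ((μ 2 : k) * coeff μ f + (μ 3 : k) * coeff μ f)
        = (((μ 0 : ℤ) + μ 1 - μ 2 - μ 3 : ℤ) : k) * coeff μ f := by
      push_cast
      ring
    rw [this, hw, zsmul_eq_mul]

lemma S_hom {f : MvPolynomial (Fin 4) k} {c : ℤ} (hf : IsWeightedHomogeneous ww f c) :
    IsWeightedHomogeneous ww (Sd k f) (c - 2) := by
  intro μ hμ
  rw [coeff_Sd] at hμ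
  have hcase : (if 1 ≤ μ 2 then ((μ 0 : k) + 1)
          * coeff (μ - Finsupp.single 2 1 + Finsupp.single 0 1) f else 0) ≠ 0
      ∨ (if 1 ≤ μ 3 then ((μ 1 : k) + 1)
          * coeff (μ - Finsupp.single 3 1 + Finsupp.single 1 1) f else 0) ≠ 0 := by
    by_contra hc
    push_neg at hc
    rw [hc.1, hc.2] at hμ
    exact hμ (by ring)
  rcases hcase with hc | hc
  · by_cases h1 : 1 ≤ μ 2
    · rw [if_pos h1] at hc
      have h2 : coeff (μ - Finsupp.single 2 1 + Finsupp.single 0 1) f ≠ 0 :=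
        fun hh => hc (by rw [hh, mul_zero])
      have h3 := hf h2
      rw [weight_sub_add h1, ww2, ww0] at h3
      omega
    · rw [if_neg h1] at hc; exact absurd rfl hc
  · by_cases h1 : 1 ≤ μ 3
    · rw [if_pos h1] at hc
      have h2 : coeff (μ - Finsupp.single 3 1 + Finsupp.single 1 1) f ≠ 0 :=
        fun hh => hc (by rw [hh, mul_zero])
      have h3 := hf h2
      rw [weight_sub_add h1, ww3, ww1] at h3
      omega
    · rw [if_neg h1] at hc; exact absurd rfl hc

lemma termTd [DecidableEq ℤ] {i j : Fin 4} (hwi : ww i = 1) (hwj : ww j = -1) (c : ℤ)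
    (μ : Fin 4 →₀ ℕ) (f : MvPolynomial (Fin 4) k) :
    (if 1 ≤ μ i then ((μ j : k) + 1)
        * coeff (μ - Finsupp.single i 1 + Finsupp.single j 1)
            (weightedHomogeneousComponent ww (c - 2) f) else 0)
    = if Finsupp.weight ww μ = c then
        (if 1 ≤ μ i then ((μ j : k) + 1)
          * coeff (μ - Finsupp.single i 1 + Finsupp.single j 1) f else 0)
      else 0 := by
  by_cases hi : 1 ≤ μ i
  · rw [if_pos hi, if_pos hi, coeff_weightedHomogeneousComponent, weight_sub_add hi, hwi, hwj]
    by_cases hw : Finsupp.weight ww μ = c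
    · rw [if_pos (by omega), if_pos hw]
    · rw [if_neg (fun hh => hw (by omega)), if_neg hw, mul_zero]
  · rw [if_neg hi, if_neg hi, ite_self 0]
  
lemma wHC_Td (c : ℤ) (f : MvPolynomial (Fin 4) k) :
    weightedHomogeneousComponent ww c (Td k f)
      = Td k (weightedHomogeneousComponent ww (c - 2) f) := by
  classical
  ext μ
  rw [coeff_weightedHomogeneousComponent, coeff_Td, coeff_Td,
    termTd ww0 ww2, termTd ww1 ww3]
  by_cases hw : Finsupp.weight ww μ = c
  · rw [if_pos hw, if_pos hw, if_pos hw]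
  · rw [if_neg hw, if_neg hw, if_neg hw, add_zero]

lemma wHC_self {f : MvPolynomial (Fin 4) k} {c : ℤ} (hf : IsWeightedHomogeneous ww f c) :
    weightedHomogeneousComponent ww c f = f := by
  classical
  ext μ
  rw [coeff_weightedHomogeneousComponent]
  by_cases hw : Finsupp.weight ww μ = c
  · rw [if_pos hw]
  · rw [if_neg hw]
    by_contra hz
    exact hw (hf fun hh => hz hh.symm)

lemma Sd_monomial (μ : Fin 4 →₀ ℕ) (a : k) :
    Sd k (monomial μ a) =
      (μ 0 : k) • monomial (μ - Finsupp.single 0 1 + Finsupp.single 2 1) a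
      + (μ 1 : k) • monomial (μ - Finsupp.single 1 1 + Finsupp.single 3 1) a := by
  rw [Sd_apply, pderiv_monomial, pderiv_monomial]
  rw [show (X 2 : MvPolynomial (Fin 4) k) = monomial (Finsupp.single 2 1) 1 from rfl,
    show (X 3 : MvPolynomial (Fin 4) k) = monomial (Finsupp.single 3 1) 1 from rfl,
    monomial_mul, monomial_mul, smul_monomial, smul_monomial]
  rw [add_comm (Finsupp.single 2 1), add_comm (Finsupp.single 3 1)]
  congr 1 <;> · congr 1; rw [smul_eq_mul]; ring

lemma zsmul_cancel {c : ℤ} (hc : c ≠ 0) {v : MvPolynomial (Fin 4) k} (hv : c • v = 0) :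
    v = 0 := by
  have h1 : ((c : k)) • v = 0 := by rw [Int.cast_smul_eq_zsmul]; exact hv
  rcases smul_eq_zero.mp h1 with h | h
  · exact absurd (Int.cast_eq_zero.mp h) hc
  · exact h

lemma S_nilpotent_mono : ∀ (e : ℕ) (μ : Fin 4 →₀ ℕ) (a : k), μ 0 + μ 1 ≤ e →
    (((Sd k).toLinearMap) ^ (e + 1)) (monomial μ a) = 0 := by
  intro e
  induction e with
  | zero =>
      intro μ a hμ
      rw [pow_one]
      show Sd k (monomial μ a) = 0
      rw [Sd_monomial]
      have h0 : μ 0 = 0 := by omega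
      have h1 : μ 1 = 0 := by omega
      rw [h0, h1]
      simp
  | succ n ih =>
      intro μ a hμ
      have hstep : (((Sd k).toLinearMap) ^ (n + 1 + 1)) (monomial μ a)
          = (((Sd k).toLinearMap) ^ (n + 1)) (Sd k (monomial μ a)) := by
        rw [pow_succ, Module.End.mul_apply]
        rfl
      rw [hstep, Sd_monomial, map_add, map_smul, map_smul]
      have e1 : (((Sd k).toLinearMap) ^ (n + 1))
          (monomial (μ - Finsupp.single 0 1 + Finsupp.single 2 1) a) = 0 ∨ (μ 0 : k) = 0 := by
        rcases Nat.eq_zero_or_pos (μ 0) with h | h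
        · right; rw [h]; simp
        · left
          apply ih
          have ha : ((μ - Finsupp.single 0 1 + Finsupp.single 2 1 : Fin 4 →₀ ℕ)) 0 = μ 0 - 1 := by
            rw [Finsupp.add_apply, Finsupp.tsub_apply, Finsupp.single_eq_same,
              Finsupp.single_eq_of_ne (by decide)]
            omega
          have hb : ((μ - Finsupp.single 0 1 + Finsupp.single 2 1 : Fin 4 →₀ ℕ)) 1 = μ 1 := by
            rw [Finsupp.add_apply, Finsupp.tsub_apply, Finsupp.single_eq_of_ne (by decide),
              Finsupp.single_eq_of_ne (by decide)]
            omega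
          omega
      have e2 : (((Sd k).toLinearMap) ^ (n + 1))
          (monomial (μ - Finsupp.single 1 1 + Finsupp.single 3 1) a) = 0 ∨ (μ 1 : k) = 0 := by
        rcases Nat.eq_zero_or_pos (μ 1) with h | h
        · right; rw [h]; simp
        · left
          apply ih
          have ha : ((μ - Finsupp.single 1 1 + Finsupp.single 3 1 : Fin 4 →₀ ℕ)) 1 = μ 1 - 1 := by
            rw [Finsupp.add_apply, Finsupp.tsub_apply, Finsupp.single_eq_same,
              Finsupp.single_eq_of_ne (by decide)]
            omega
          have hb : ((μ - Finsupp.single 1 1 + Finsupp.single 3 1 : Fin 4 →₀ ℕ)) 0 = μ 0 := by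
            rw [Finsupp.add_apply, Finsupp.tsub_apply, Finsupp.single_eq_of_ne (by decide),
              Finsupp.single_eq_of_ne (by decide)]
            omega
          omega
      rcases e1 with e1 | e1 <;> rcases e2 with e2 | e2 <;> rw [e1, e2] <;> simp

lemma S_nilpotent (f : MvPolynomial (Fin 4) k) :
    ∃ N, (((Sd k).toLinearMap) ^ N) f = 0 := by
  classical
  set e := f.support.sup (fun μ => μ 0 + μ 1) with he
  refine ⟨e + 1, ?_⟩
  have hsum := f.as_sum
  rw [hsum]
  rw [map_sum]
  apply Finset.sum_eq_zero
  intro μ hμ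
  exact S_nilpotent_mono _ μ _ (le_trans (Finset.le_sup (f := fun μ => μ 0 + μ 1) hμ) le_rfl)

lemma P3core {h φ : MvPolynomial (Fin 4) k} (hS : Sd k h = 0)
    (hwh : IsWeightedHomogeneous ww h 0) (hT : Td k φ = h) : h = 0 := by
  classical
  set φ' := weightedHomogeneousComponent ww (-2) φ with hφ'def
  have hTφ' : Td k φ' = h := by
    have h1 := wHC_Td (k := k) 0 φ
    rw [hT, wHC_self hwh] at h1
    rw [hφ'def, show (-2 : ℤ) = 0 - 2 by ring]
    exact h1.symm
  have hφ'h : IsWeightedHomogeneous ww φ' (-2) :=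
    weightedHomogeneousComponent_isWeightedHomogeneous _ _
  set L := (Sd k).toLinearMap with hLdef
  have hLS : ∀ (j : ℕ) (v : MvPolynomial (Fin 4) k), (L ^ (j+1)) v = Sd k ((L ^ j) v) := by
    intro j v
    rw [pow_succ', Module.End.mul_apply]
    rfl
  have hiter : ∀ j : ℕ, IsWeightedHomogeneous ww ((L ^ j) φ') (-2 - 2 * j) := by
    intro j
    induction j with
    | zero =>
        rw [pow_zero, Module.End.one_apply]
        simpa using hφ'h
    | succ n ih =>
        rw [hLS, show (-2 - 2 * ((n+1 : ℕ) : ℤ)) = (-2 - 2 * (n : ℕ)) - 2 by push_cast; ring]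
        exact S_hom ih
  have hrec : ∀ j : ℕ, Td k ((L ^ (j+1)) φ')
      = (-(((j:ℤ)+1) * ((j:ℤ)+2))) • ((L ^ j) φ') := by
    intro j
    induction j with
    | zero =>
        have hb := bracket_TS (k := k) φ'
        rw [hTφ', hS, sub_zero] at hb
        rw [hLS, pow_zero, Module.End.one_apply, hb, euler hφ'h]
        norm_num
    | succ n ih =>
        have hb := bracket_TS (k := k) ((L ^ (n+1)) φ')
        rw [ih] at hb
        have he := euler (k := k) (hiter (n+1))
        rw [he] at hb
        have hsd : Sd k ((-(((n:ℤ)+1) * ((n:ℤ)+2))) • ((L ^ n) φ'))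
            = (-(((n:ℤ)+1) * ((n:ℤ)+2))) • Sd k ((L ^ n) φ') := by
          rw [← Int.cast_smul_eq_zsmul k, ← Int.cast_smul_eq_zsmul k, Derivation.map_smul]
        rw [hsd] at hb
        have hkey := sub_eq_iff_eq_add.mp hb
        rw [hLS, hkey, ← hLS, ← add_smul]
        congr 1
        push_cast
        ring
  have hzero : ∀ j : ℕ, (L ^ j) φ' = 0 → φ' = 0 := by
    intro j
    induction j with
    | zero =>
        intro h0
        rw [pow_zero, Module.End.one_apply] at h0
        exact h0
    | succ n ih =>
        intro h0
        have hr := hrec n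
        rw [h0, map_zero] at hr
        have hc : (-(((n:ℤ)+1) * ((n:ℤ)+2))) ≠ 0 := by
          have : ((n:ℤ)+1) * ((n:ℤ)+2) > 0 := by positivity
          omega
        exact ih (zsmul_cancel hc hr.symm)
  obtain ⟨N, hN⟩ := S_nilpotent φ'
  rw [← hTφ', hzero N hN, map_zero]

lemma theta_X0 : θ k (X 0) = X 0 := by simp [θ]
lemma theta_X1 : θ k (X 1) = X 1 := by simp [θ]
lemma theta_X2 : θ k (X 2) = gP k := by simp [θ]

lemma theta_inj : Function.Injective (θ (k := k)) := by
  classical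
  set K := FractionRing (MvPolynomial (Fin 3) k)
  set u : K := algebraMap (MvPolynomial (Fin 3) k) K (X 0) with hu
  have hune : u ≠ 0 := by
    rw [hu]
    simp only [ne_eq, map_eq_zero_iff _ (IsFractionRing.injective (MvPolynomial (Fin 3) k) K)]
    exact X_ne_zero 0
  set π : MvPolynomial (Fin 4) k →ₐ[k] K :=
    aeval ![algebraMap (MvPolynomial (Fin 3) k) K (X 0),
            algebraMap (MvPolynomial (Fin 3) k) K (X 1),
            0,
            u⁻¹ * algebraMap (MvPolynomial (Fin 3) k) K (X 2)] with hπ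
  have hcomp : (π.comp (θ k)) = (IsScalarTower.toAlgHom k (MvPolynomial (Fin 3) k) K) := by
    apply MvPolynomial.algHom_ext
    intro i
    fin_cases i
    · simp [π, θ, gP]
    · simp [π, θ, gP]
    · rw [AlgHom.comp_apply]
      rw [show ((X (⟨2, by norm_num⟩ : Fin 3)) : MvPolynomial (Fin 3) k) = X 2 from rfl,
        theta_X2]
      rw [hπ]
      simp [gP]
      rw [← hu, ← mul_assoc, mul_inv_cancel₀ hune, one_mul]
  have hinj : Function.Injective (π.comp (θ k)) := by
    rw [hcomp]
    exact IsFractionRing.injective (MvPolynomial (Fin 3) k) K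
  intro a b hab
  apply hinj
  simp only [AlgHom.comp_apply, hab]

lemma range_vec : Set.range ![X 0, X 1, gP k]
    = ({X 0, X 1, gP k} : Set (MvPolynomial (Fin 4) k)) := by
  ext x
  constructor
  · rintro ⟨i, rfl⟩
    fin_cases i
    · left; rfl
    · right; left; rfl
    · right; right; exact rfl
  · rintro (rfl | rfl | rfl)
    exacts [⟨0, rfl⟩, ⟨1, rfl⟩, ⟨2, rfl⟩]

lemma theta_range :
    (θ (k := k)).range = Algebra.adjoin k ({X 0, X 1, gP k} : Set (MvPolynomial (Fin 4) k)) := by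
  rw [← range_vec, Algebra.adjoin_range_eq_range_aeval]
  rfl

lemma chain (Q : MvPolynomial (Fin 3) k) :
    pderiv 2 (θ k Q) = θ k (pderiv 2 Q) * (-(X 1)) ∧
      pderiv 3 (θ k Q) = θ k (pderiv 2 Q) * (X 0) := by
  have hv2 : ∀ i : Fin 3, pderiv 2 (![(X 0 : MvPolynomial (Fin 4) k), X 1, gP k] i)
      = θ k (pderiv 2 (X i)) * (-(X 1)) := by
    intro i
    fin_cases i <;> simp [gP, pderiv_X, pderiv_mul, pderiv_X_of_ne, θ]
  have hv3 : ∀ i : Fin 3, pderiv 3 (![(X 0 : MvPolynomial (Fin 4) k), X 1, gP k] i)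
      = θ k (pderiv 2 (X i)) * (X 0) := by
    intro i
    fin_cases i <;> simp [gP, pderiv_X, pderiv_mul, pderiv_X_of_ne, θ]
  induction Q using MvPolynomial.induction_on with
  | C r => simp [θ]
  | add p q hp hq =>
      simp only [map_add, hp.1, hq.1, hp.2, hq.2]
      constructor <;> ring
  | mul_X p i hp =>
      have hθX : θ k (X i) = ![(X 0 : MvPolynomial (Fin 4) k), X 1, gP k] i := aeval_X _ i
      have hw : pderiv 2 (p * X i) = pderiv 2 p * X i + p * pderiv 2 (X i) := pderiv_mul
      constructor
      · rw [map_mul, hθX, pderiv_mul, hp.1, hw, map_add, map_mul, map_mul, hθX, hv2 i]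
        ring
      · rw [map_mul, hθX, pderiv_mul, hp.2, hw, map_add, map_mul, map_mul, hθX, hv3 i]
        ring

lemma integrate (q : MvPolynomial (Fin 3) k) : ∃ G, pderiv 2 G = q := by
  classical
  refine ⟨q.support.sum fun μ => monomial (μ + Finsupp.single 2 1)
    ((coeff μ q) / ((μ 2 : k) + 1)), ?_⟩
  rw [map_sum]
  conv_rhs => rw [q.as_sum]
  apply Finset.sum_congr rfl
  intro μ hμ
  rw [pderiv_monomial, add_tsub_cancel_right]
  congr 1
  have h2 : ((μ + Finsupp.single 2 1 : Fin 3 →₀ ℕ)) 2 = μ 2 + 1 := by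
    rw [Finsupp.add_apply, Finsupp.single_eq_same]
  rw [h2]
  have hne : ((μ 2 : k) + 1) ≠ 0 := by
    have := Nat.cast_add_one_ne_zero (R := k) (μ 2)
    simpa using this
  field_simp
  rw [Nat.cast_add_one]

lemma support_pderiv {i : Fin 4} {μ : Fin 4 →₀ ℕ} {f : MvPolynomial (Fin 4) k}
    (h : μ ∈ (pderiv i f).support) : μ + Finsupp.single i 1 ∈ f.support := by
  rw [mem_support_iff] at h ⊢
  rw [coeff_pderiv'] at h
  intro hc
  rw [hc, mul_zero] at h
  exact h rfl

lemma no_y_vars {f : MvPolynomial (Fin 4) k} (h2 : pderiv 2 f = 0) (h3 : pderiv 3 f = 0) :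
    f ∈ supported k ({0, 1} : Set (Fin 4)) := by
  rw [mem_supported]
  intro i hi
  rw [Finset.mem_coe, mem_vars] at hi
  obtain ⟨μ, hμ, hiμ⟩ := hi
  have key : ∀ j : Fin 4, pderiv j f = 0 → μ j = 0 := by
    intro j hj
    by_contra hne
    have h1 : 1 ≤ μ j := Nat.one_le_iff_ne_zero.mpr hne
    have hc : coeff (μ - Finsupp.single j 1) (pderiv j f) = 0 := by rw [hj, coeff_zero]
    rw [coeff_pderiv'] at hc
    rw [tsub_add_cancel_of_le (Finsupp.single_le_iff.mpr h1)] at hc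
    rcases mul_eq_zero.mp hc with hc1 | hc1
    · have hcne : ((μ - Finsupp.single j 1 : Fin 4 →₀ ℕ) j : k) + 1 ≠ 0 := by
        have := Nat.cast_add_one_ne_zero (R := k) ((μ - Finsupp.single j 1 : Fin 4 →₀ ℕ) j)
        simpa using this
      exact hcne hc1
    · exact (mem_support_iff.mp hμ) hc1
  fin_cases i
  · exact Set.mem_insert _ _
  · exact Set.mem_insert_of_mem _ rfl
  · exact absurd (key 2 h2) (Finsupp.mem_support_iff.mp hiμ)
  · exact absurd (key 3 h3) (Finsupp.mem_support_iff.mp hiμ)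

lemma primeX {n : ℕ} (i : Fin (n + 1)) : Prime (X i : MvPolynomial (Fin (n + 1)) k) := by
  rw [← MulEquiv.prime_iff (renameEquiv k (Equiv.swap i 0)).toMulEquiv]
  have : (renameEquiv k (Equiv.swap i 0)) (X i : MvPolynomial (Fin (n + 1)) k) = X 0 := by
    simp [renameEquiv_apply, rename_X]
  rw [show ((renameEquiv k (Equiv.swap i 0)).toMulEquiv (X i : MvPolynomial (Fin (n + 1)) k))
      = X 0 from this]
  rw [← MulEquiv.prime_iff (finSuccEquiv k n).toMulEquiv]
  rw [show ((finSuccEquiv k n).toMulEquiv (X 0 : MvPolynomial (Fin (n + 1)) k))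
      = Polynomial.X from finSuccEquiv_X_zero]
  exact Polynomial.prime_X

lemma comm2 (g : MvPolynomial (Fin 4) k) : Td k (pderiv 2 g) = pderiv 2 (Td k g) := by
  have hb : (⁅(pderiv 2 : Derivation k (MvPolynomial (Fin 4) k) (MvPolynomial (Fin 4) k)),
      Td k⁆) = 0 := by
    ext i
    fin_cases i <;> simp [Derivation.commutator_apply, pderiv_X]
  have h2 := congrArg (fun (D : Derivation k (MvPolynomial (Fin 4) k) (MvPolynomial (Fin 4) k))
    => D g) hb
  simp only [Derivation.commutator_apply, Derivation.zero_apply] at h2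
  exact (sub_eq_zero.mp h2).symm

lemma comm3 (g : MvPolynomial (Fin 4) k) : Td k (pderiv 3 g) = pderiv 3 (Td k g) := by
  have hb : (⁅(pderiv 3 : Derivation k (MvPolynomial (Fin 4) k) (MvPolynomial (Fin 4) k)),
      Td k⁆) = 0 := by
    ext i
    fin_cases i <;> simp [Derivation.commutator_apply, pderiv_X]
  have h2 := congrArg (fun (D : Derivation k (MvPolynomial (Fin 4) k) (MvPolynomial (Fin 4) k))
    => D g) hb
  simp only [Derivation.commutator_apply, Derivation.zero_apply] at h2
  exact (sub_eq_zero.mp h2).symm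

lemma supported_le_adjoin :
    supported k ({0, 1} : Set (Fin 4))
      ≤ Algebra.adjoin k ({X 0, X 1, gP k} : Set (MvPolynomial (Fin 4) k)) := by
  have : supported k ({0, 1} : Set (Fin 4))
      = Algebra.adjoin k (X '' ({0, 1} : Set (Fin 4))) := rfl
  rw [this]
  apply Algebra.adjoin_mono
  rw [Set.image_insert_eq, Set.image_singleton]
  intro x hx
  rcases hx with rfl | rfl
  · left; rfl
  · right; left; rfl

lemma P2 {f : MvPolynomial (Fin 4) k} (hf : Td k f = 0) :
    f ∈ Algebra.adjoin k ({X 0, X 1, gP k} : Set (MvPolynomial (Fin 4) k)) := by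
  classical
  suffices H : ∀ (n : ℕ) (f : MvPolynomial (Fin 4) k), Td k f = 0 →
      (∀ μ ∈ f.support, μ 2 + μ 3 ≤ n) →
      f ∈ Algebra.adjoin k ({X 0, X 1, gP k} : Set (MvPolynomial (Fin 4) k)) by
    exact H (f.support.sup fun μ => μ 2 + μ 3) f hf
      (fun μ hμ => Finset.le_sup (f := fun μ => μ 2 + μ 3) hμ)
  intro n
  induction n with
  | zero =>
      intro f hf hbound
      have h2 : pderiv 2 f = 0 := by
        rw [eq_zero_iff]
        intro d
        by_contra hc
        have hm := support_pderiv (mem_support_iff.mpr hc)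
        have := hbound _ hm
        have : ((d + Finsupp.single 2 1 : Fin 4 →₀ ℕ)) 2 = d 2 + 1 := by
          rw [Finsupp.add_apply, Finsupp.single_eq_same]
        omega
      have h3 : pderiv 3 f = 0 := by
        rw [eq_zero_iff]
        intro d
        by_contra hc
        have hm := support_pderiv (mem_support_iff.mpr hc)
        have := hbound _ hm
        have : ((d + Finsupp.single 3 1 : Fin 4 →₀ ℕ)) 3 = d 3 + 1 := by
          rw [Finsupp.add_apply, Finsupp.single_eq_same]
        omega
      exact supported_le_adjoin (no_y_vars h2 h3)
  | succ n ih =>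
      intro f hf hbound
      have hT2 : Td k (pderiv 2 f) = 0 := by rw [comm2, hf, map_zero]
      have hT3 : Td k (pderiv 3 f) = 0 := by rw [comm3, hf, map_zero]
      have hb2 : ∀ μ ∈ (pderiv 2 f).support, μ 2 + μ 3 ≤ n := by
        intro μ hμ
        have hm := support_pderiv hμ
        have hb := hbound _ hm
        have e2 : ((μ + Finsupp.single 2 1 : Fin 4 →₀ ℕ)) 2 = μ 2 + 1 := by
          rw [Finsupp.add_apply, Finsupp.single_eq_same]
        have e3 : ((μ + Finsupp.single 2 1 : Fin 4 →₀ ℕ)) 3 = μ 3 := by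
          rw [Finsupp.add_apply, Finsupp.single_eq_of_ne (by decide)]
          omega
        omega
      have hb3 : ∀ μ ∈ (pderiv 3 f).support, μ 2 + μ 3 ≤ n := by
        intro μ hμ
        have hm := support_pderiv hμ
        have hb := hbound _ hm
        have e2 : ((μ + Finsupp.single 3 1 : Fin 4 →₀ ℕ)) 2 = μ 2 := by
          rw [Finsupp.add_apply, Finsupp.single_eq_of_ne (by decide)]
          omega
        have e3 : ((μ + Finsupp.single 3 1 : Fin 4 →₀ ℕ)) 3 = μ 3 + 1 := by
          rw [Finsupp.add_apply, Finsupp.single_eq_same]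
        omega
      have hm2 := ih _ hT2 hb2
      have hm3 := ih _ hT3 hb3
      rw [← theta_range] at hm2 hm3
      obtain ⟨Q2, hQ2'⟩ := hm2
      obtain ⟨Q3, hQ3'⟩ := hm3
      have hQ2 : θ k Q2 = pderiv 2 f := hQ2'
      have hQ3 : θ k Q3 = pderiv 3 f := hQ3'
      have hrel : X 0 * Q2 + X 1 * Q3 = 0 := by
        apply theta_inj
        rw [map_add, map_mul, map_mul, theta_X0, theta_X1, hQ2, hQ3, map_zero]
        rw [← Td_apply, hf]
      have hdvd : (X 1 : MvPolynomial (Fin 3) k) ∣ Q2 := by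
        have hd : (X 1 : MvPolynomial (Fin 3) k) ∣ X 0 * Q2 :=
          ⟨-Q3, by linear_combination hrel⟩
        rcases (primeX 1).2.2 _ _ hd with h | h
        · exfalso
          have := X_dvd_X.mp h
          exact absurd this (by decide)
        · exact h
      obtain ⟨q, hq⟩ := hdvd
      have hQ3e : Q3 = -(X 0 * q) := by
        have hX1 : (X 1 : MvPolynomial (Fin 3) k) ≠ 0 := X_ne_zero 1
        apply mul_left_cancel₀ hX1
        have h5 : X 0 * (X 1 * q) + X 1 * Q3 = 0 := by rw [← hq]; exact hrel
        linear_combination h5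
      obtain ⟨G, hG⟩ := integrate (-q)
      have hc := chain (k := k) G
      have e2 : pderiv 2 (f - θ k G) = 0 := by
        rw [map_sub, hc.1, hG, map_neg]
        have : pderiv 2 f = θ k (X 1 * q) := by rw [← hq, hQ2]
        rw [this, map_mul, theta_X1]
        ring
      have e3 : pderiv 3 (f - θ k G) = 0 := by
        rw [map_sub, hc.2, hG, map_neg]
        have : pderiv 3 f = θ k (-(X 0 * q)) := by rw [← hQ3e, hQ3]
        rw [this, map_neg, map_mul, theta_X0]
        ring
      have hsup := supported_le_adjoin (no_y_vars e2 e3)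
      have hθG : θ k G ∈ Algebra.adjoin k ({X 0, X 1, gP k} : Set (MvPolynomial (Fin 4) k)) := by
        rw [← theta_range]
        exact ⟨G, rfl⟩
      have := Subalgebra.add_mem _ hsup hθG
      simpa using this

lemma decompW (W : MvPolynomial (Fin 3) k) :
    ∃ a b, W = X 0 * a + X 1 * b + aeval ![0, 0, X 2] W := by
  induction W using MvPolynomial.induction_on with
  | C r => exact ⟨0, 0, by simp⟩
  | add p q hp hq =>
      obtain ⟨a, b, hp⟩ := hp
      obtain ⟨c, d, hq⟩ := hq
      refine ⟨a + c, b + d, ?_⟩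
      rw [map_add]
      linear_combination hp + hq
  | mul_X p i hp =>
      obtain ⟨a, b, hp⟩ := hp
      fin_cases i
      · refine ⟨p, 0, ?_⟩
        show p * X 0 = X 0 * p + X 1 * 0 + aeval ![0, 0, X 2] (p * X 0)
        have hε : aeval ![(0 : MvPolynomial (Fin 3) k), 0, X 2] (p * X 0)
            = 0 := by rw [map_mul, aeval_X]; simp
        rw [hε]
        ring
      · refine ⟨0, p, ?_⟩
        show p * X 1 = X 0 * 0 + X 1 * p + aeval ![0, 0, X 2] (p * X 1)
        have hε : aeval ![(0 : MvPolynomial (Fin 3) k), 0, X 2] (p * X 1)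
            = 0 := by rw [map_mul, aeval_X]; simp
        rw [hε]
        ring
      · refine ⟨a * X 2, b * X 2, ?_⟩
        show p * X 2 = X 0 * (a * X 2) + X 1 * (b * X 2) + aeval ![0, 0, X 2] (p * X 2)
        have hε : aeval ![(0 : MvPolynomial (Fin 3) k), 0, X 2] (p * X 2)
            = aeval ![(0 : MvPolynomial (Fin 3) k), 0, X 2] p * X 2 := by
          rw [map_mul, aeval_X]
          rfl
        rw [hε]
        linear_combination (X 2 : MvPolynomial (Fin 3) k) * hp

lemma theta_eps (W : MvPolynomial (Fin 3) k) :
    θ k (aeval ![0, 0, X 2] W) = aeval ![0, 0, gP k] W := by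
  have hcomp : (θ (k := k)).comp (aeval ![0, 0, X 2]) = aeval ![0, 0, gP k] := by
    apply MvPolynomial.algHom_ext
    intro i
    fin_cases i <;> simp [θ]
  exact DFunLike.congr_fun hcomp W

lemma gP_wh : IsWeightedHomogeneous ww (gP k) 0 := by
  rw [← mem_weightedHomogeneousSubmodule]
  apply Submodule.sub_mem
  · rw [mem_weightedHomogeneousSubmodule]
    have := (isWeightedHomogeneous_X k ww 0).mul (isWeightedHomogeneous_X k ww 3)
    rw [show ww 0 + ww 3 = 0 from rfl] at this
    exact this
  · rw [mem_weightedHomogeneousSubmodule]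
    have := (isWeightedHomogeneous_X k ww 1).mul (isWeightedHomogeneous_X k ww 2)
    rw [show ww 1 + ww 2 = 0 from rfl] at this
    exact this

lemma eps_props_aux :
    ∀ x ∈ Algebra.adjoin k (Set.range ![(0 : MvPolynomial (Fin 4) k), 0, gP k]),
      Sd k x = 0 ∧ IsWeightedHomogeneous ww x 0 := by
  intro x hx
  induction hx using Algebra.adjoin_induction with
  | mem x hx =>
      obtain ⟨i, rfl⟩ := hx
      fin_cases i
      · constructor
        · show Sd k 0 = 0
          exact map_zero _
        · show IsWeightedHomogeneous ww (0 : MvPolynomial (Fin 4) k) 0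
          intro d hd
          simp at hd
      · constructor
        · show Sd k 0 = 0
          exact map_zero _
        · show IsWeightedHomogeneous ww (0 : MvPolynomial (Fin 4) k) 0
          intro d hd
          simp at hd
      · exact ⟨Sd_g, gP_wh⟩
  | algebraMap r =>
      refine ⟨derivation_C _ r, ?_⟩
      rw [show (algebraMap k (MvPolynomial (Fin 4) k)) r = C r from rfl]
      exact isWeightedHomogeneous_C ww r
  | add x y _ _ hx hy =>
      refine ⟨by rw [map_add, hx.1, hy.1, add_zero], ?_⟩
      rw [← mem_weightedHomogeneousSubmodule]
      exact Submodule.add_mem _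
        ((mem_weightedHomogeneousSubmodule _ _ _ _).mpr hx.2)
        ((mem_weightedHomogeneousSubmodule _ _ _ _).mpr hy.2)
  | mul x y _ _ hx hy =>
      refine ⟨?_, ?_⟩
      · rw [Derivation.leibniz, hx.1, hy.1, smul_zero, smul_zero, add_zero]
      · have := hx.2.mul hy.2
        rw [show (0 : ℤ) + 0 = 0 from rfl] at this
        exact this

lemma eps_props (W : MvPolynomial (Fin 3) k) :
    Sd k (aeval ![0, 0, gP k] W) = 0 ∧
      IsWeightedHomogeneous ww (aeval ![(0 : MvPolynomial (Fin 4) k), 0, gP k] W) 0 := by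
  apply eps_props_aux
  rw [Algebra.adjoin_range_eq_range_aeval]
  exact ⟨W, rfl⟩

lemma P3 {w : MvPolynomial (Fin 4) k} (hw : Td k w = 0) (him : ∃ f, Td k f = w) :
    ∃ a1 ∈ Algebra.adjoin k ({X 0, X 1, gP k} : Set (MvPolynomial (Fin 4) k)),
      ∃ a2 ∈ Algebra.adjoin k ({X 0, X 1, gP k} : Set (MvPolynomial (Fin 4) k)),
        w = X 0 * a1 + X 1 * a2 := by
  obtain ⟨f, hf⟩ := him
  have hwA := P2 hw
  rw [← theta_range] at hwA
  obtain ⟨W, hW'⟩ := hwA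
  have hWeq : θ k W = w := hW'
  obtain ⟨a, b, hW⟩ := decompW W
  have hamem : θ k a ∈ Algebra.adjoin k ({X 0, X 1, gP k} : Set (MvPolynomial (Fin 4) k)) := by
    rw [← theta_range]; exact ⟨a, rfl⟩
  have hbmem : θ k b ∈ Algebra.adjoin k ({X 0, X 1, gP k} : Set (MvPolynomial (Fin 4) k)) := by
    rw [← theta_range]; exact ⟨b, rfl⟩
  have hTa : Td k (θ k a) = 0 := ker_adjoin hamem
  have hTb : Td k (θ k b) = 0 := ker_adjoin hbmem
  have hsplit : w = X 0 * θ k a + X 1 * θ k b + aeval ![0, 0, gP k] W := by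
    rw [← hWeq]
    conv_lhs => rw [hW]
    rw [map_add, map_add, map_mul, map_mul, theta_X0, theta_X1, theta_eps]
  have hφT : Td k (f - (θ k a * X 2 + θ k b * X 3))
      = aeval ![(0 : MvPolynomial (Fin 4) k), 0, gP k] W := by
    rw [map_sub, map_add, Derivation.leibniz, Derivation.leibniz, hTa, hTb, Td_X2, Td_X3, hf]
    rw [smul_zero, smul_zero, smul_eq_mul, smul_eq_mul]
    rw [hsplit]
    ring
  have hz := P3core (eps_props W).1 (eps_props W).2 hφT
  refine ⟨θ k a, hamem, θ k b, hbmem, ?_⟩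
  rw [hsplit, hz, add_zero]

lemma F1 {b : MvPolynomial (Fin 4) k} (hb : Td k (Td k b) = 0) :
    ∃ a0 ∈ Algebra.adjoin k ({X 0, X 1, gP k} : Set (MvPolynomial (Fin 4) k)),
      ∃ a1 ∈ Algebra.adjoin k ({X 0, X 1, gP k} : Set (MvPolynomial (Fin 4) k)),
        ∃ a2 ∈ Algebra.adjoin k ({X 0, X 1, gP k} : Set (MvPolynomial (Fin 4) k)),
          b = a0 + a1 * X 2 + a2 * X 3 := by
  obtain ⟨a1, h1, a2, h2, hsum⟩ := P3 hb ⟨b, rfl⟩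
  have h0T : Td k (b - (a1 * X 2 + a2 * X 3)) = 0 := by
    rw [map_sub, map_add, Derivation.leibniz, Derivation.leibniz, ker_adjoin h1, ker_adjoin h2,
      Td_X2, Td_X3, smul_zero, smul_zero, smul_eq_mul, smul_eq_mul]
    rw [hsum]
    ring
  exact ⟨b - (a1 * X 2 + a2 * X 3), P2 h0T, a1, h1, a2, h2, by ring⟩

end

end WinkAux

open WinkAux in
/-- Let `B = k[x₁,x₂,y₁,y₂]` and `T = x₁ ∂_{y₁} + x₂ ∂_{y₂}`, a locally nilpotent
derivation with kernel `A = k[x₁, x₂, g]`, `g = x₁y₂ − x₂y₁`. Then the first degree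
module `F₁ = ker T²` equals `A + A y₁ + A y₂`, and the plinth ideal `T F₁ = A ∩ TB`
equals `x₁A + x₂A`. -/
theorem winkelmann_four_variable_module {k : Type*} [Field k] [CharZero k]
    (x1 x2 y1 y2 g : MvPolynomial (Fin 4) k)
    (hx1 : x1 = X 0) (hx2 : x2 = X 1) (hy1 : y1 = X 2) (hy2 : y2 = X 3)
    (hg : g = x1 * y2 - x2 * y1)
    (T : Derivation k (MvPolynomial (Fin 4) k) (MvPolynomial (Fin 4) k))
    (hT : T = x1 • pderiv 2 + x2 • pderiv 3)
    (A : Subalgebra k (MvPolynomial (Fin 4) k))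
    (hA : A = Algebra.adjoin k {x1, x2, g}) :
    (∀ b, T (T b) = 0 ↔ ∃ a0 ∈ A, ∃ a1 ∈ A, ∃ a2 ∈ A, b = a0 + a1 * y1 + a2 * y2) ∧
    ({w | T w = 0 ∧ ∃ b, T b = w} =
      {w : MvPolynomial (Fin 4) k | ∃ a1 ∈ A, ∃ a2 ∈ A, w = x1 * a1 + x2 * a2}) := by
  subst hx1 hx2 hy1 hy2 hg hA
  have hTd : T = Td k := by
    rw [hT]
    ext i
    fin_cases i <;> simp [Td_apply, pderiv_X, smul_eq_mul]
  have hgP : (X 0 * X 3 - X 1 * X 2 : MvPolynomial (Fin 4) k) = gP k := rfl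
  rw [hTd, hgP]
  constructor
  · intro b
    constructor
    · intro hb
      exact F1 hb
    · rintro ⟨a0, ha0, a1, ha1, a2, ha2, rfl⟩
      have h1 : Td k (a0 + a1 * X 2 + a2 * X 3) = a1 * X 0 + a2 * X 1 := by
        rw [map_add, map_add, Derivation.leibniz, Derivation.leibniz, ker_adjoin ha0,
          ker_adjoin ha1, ker_adjoin ha2, Td_X2, Td_X3]
        simp only [smul_zero, smul_eq_mul, zero_add, add_zero, mul_zero]
      rw [h1, map_add, Derivation.leibniz, Derivation.leibniz, ker_adjoin ha1, ker_adjoin ha2]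
      simp
  · ext w
    simp only [Set.mem_setOf_eq]
    constructor
    · rintro ⟨hw0, b, hb⟩
      have hb2 : Td k (Td k b) = 0 := by rw [hb]; exact hw0
      obtain ⟨a0, ha0, a1, ha1, a2, ha2, hbe⟩ := F1 hb2
      refine ⟨a1, ha1, a2, ha2, ?_⟩
      rw [← hb, hbe]
      rw [map_add, map_add, Derivation.leibniz, Derivation.leibniz, ker_adjoin ha0,
        ker_adjoin ha1, ker_adjoin ha2, Td_X2, Td_X3]
      simp only [smul_zero, smul_eq_mul, zero_add, add_zero, mul_zero]
      ring
    · rintro ⟨a1, ha1, a2, ha2, rfl⟩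
      constructor
      · rw [map_add, Derivation.leibniz, Derivation.leibniz, ker_adjoin ha1, ker_adjoin ha2,
          Td_X0, Td_X1]
        simp
      · refine ⟨a1 * X 2 + a2 * X 3, ?_⟩
        rw [map_add, Derivation.leibniz, Derivation.leibniz, ker_adjoin ha1, ker_adjoin ha2,
          Td_X2, Td_X3]
        simp only [smul_zero, smul_eq_mul, zero_add, add_zero, mul_zero]
        ring
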